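/- Let a, b, c ∈ ℂ[z] and let M(z) ∈ M_4(ℂ[z]) be the matrix with rows (0, 0, 0, z·c), (1, 0, 0, z·b), (0, z, 0, z·a), (0, 0, 1, 0). Then: (1) the characteristic polynomial of M(z) is det(X·1_4 − M(z)) = X⁴ − z·a·X² − z²·b·X − z²·c; (2) the constant-term matrix N = M(0) satisfies N² = 0 and rank(N) = 2. In particular, N does not lie in the closure of the minimal nilpotent orbit of sl_4. -/

import Mathlib

open Matrix in


/-- The local Higgs field recovered from the normalization of the rank-4 spectral curve
`λ⁴ - z a(z) λ² - z² b(z) λ - z² c(z) = 0`: its characteristic polynomial is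
`X⁴ - z·a·X² - z²·b·X - z²·c`, and its value at `z = 0` is square-zero of rank two,
hence does not lie in the closure of the minimal nilpotent orbit of `sl₄`. -/
theorem rank_four_local_higgs_field (a b c : Polynomial ℂ)
    (M : Matrix (Fin 4) (Fin 4) (Polynomial ℂ))
    (hM : M = !![0, 0, 0, Polynomial.X * c;
                 1, 0, 0, Polynomial.X * b;
                 0, Polynomial.X, 0, Polynomial.X * a;
                 0, 0, 1, 0]) :
    Matrix.charpoly M =
        Polynomial.X ^ 4 - Polynomial.C (Polynomial.X * a) * Polynomial.X ^ 2 -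
          Polynomial.C ((Polynomial.X : Polynomial ℂ) ^ 2 * b) * Polynomial.X -
          Polynomial.C ((Polynomial.X : Polynomial ℂ) ^ 2 * c) ∧
      (M.map (fun q => q.eval 0)) ^ 2 = 0 ∧ (M.map (fun q => q.eval 0)).rank = 2 := by
  subst hM
  have hmap : (!![0, 0, 0, Polynomial.X * c;
                 1, 0, 0, Polynomial.X * b;
                 0, Polynomial.X, 0, Polynomial.X * a;
                 0, 0, 1, 0] : Matrix (Fin 4) (Fin 4) (Polynomial ℂ)).map
        (fun q => q.eval 0)
      = (!![0,0,0,0; 1,0,0,0; 0,0,0,0; 0,0,1,0] : Matrix (Fin 4) (Fin 4) ℂ) := by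
    ext i j
    fin_cases i <;> fin_cases j <;>
      simp [Matrix.map_apply, Matrix.vecHead, Matrix.vecTail]
  rw [hmap]
  refine ⟨?_, ?_, ?_⟩
  · rw [Matrix.charpoly, Matrix.det_succ_row_zero]
    simp [Matrix.det_fin_three, Fin.sum_univ_succ, Matrix.vecHead, Matrix.vecTail,
      Matrix.charmatrix_apply, Matrix.one_apply, Fin.succAbove]
    ring
  · rw [pow_two]
    ext i j
    fin_cases i <;> fin_cases j <;> simp [Matrix.mul_apply, Fin.sum_univ_succ]
  · set N : Matrix (Fin 4) (Fin 4) ℂ := !![0,0,0,0; 1,0,0,0; 0,0,0,0; 0,0,1,0] with hN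
    rw [Matrix.rank_eq_finrank_span_cols]
    have hc0 : Nᵀ 0 = (Pi.single 1 1 : Fin 4 → ℂ) := by
      ext j; fin_cases j <;> simp [hN, Pi.single_apply, Matrix.vecHead, Matrix.vecTail]
    have hc1 : Nᵀ 1 = (0 : Fin 4 → ℂ) := by
      ext j; fin_cases j <;> simp [hN, Matrix.vecHead, Matrix.vecTail]
    have hc2 : Nᵀ 2 = (Pi.single 3 1 : Fin 4 → ℂ) := by
      ext j; fin_cases j <;> simp [hN, Pi.single_apply, Matrix.vecHead, Matrix.vecTail]
    have hc3 : Nᵀ 3 = (0 : Fin 4 → ℂ) := by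
      ext j; fin_cases j <;> simp [hN, Matrix.vecHead, Matrix.vecTail]
    have hli : LinearIndependent ℂ ![(Pi.single 1 1 : Fin 4 → ℂ), Pi.single 3 1] := by
      rw [linearIndependent_fin2]
      constructor
      · simp
      · intro s h
        have := congrFun h 1
        simp [Pi.single_apply] at this
    have hspan : Submodule.span ℂ (Set.range Nᵀ) =
        Submodule.span ℂ (Set.range ![(Pi.single 1 1 : Fin 4 → ℂ), Pi.single 3 1]) := by
      apply le_antisymm
      · rw [Submodule.span_le]
        rintro _ ⟨i, rfl⟩
        fin_cases i
        · show Nᵀ 0 ∈ _; rw [hc0]; exact Submodule.subset_span ⟨0, rfl⟩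
        · show Nᵀ 1 ∈ _; rw [hc1]; exact Submodule.zero_mem _
        · show Nᵀ 2 ∈ _; rw [hc2]; exact Submodule.subset_span ⟨1, rfl⟩
        · show Nᵀ 3 ∈ _; rw [hc3]; exact Submodule.zero_mem _
      · rw [Submodule.span_le]
        rintro _ ⟨i, rfl⟩
        fin_cases i
        · show (Pi.single 1 1 : Fin 4 → ℂ) ∈ _; rw [← hc0]
          exact Submodule.subset_span ⟨0, rfl⟩
        · show (Pi.single 3 1 : Fin 4 → ℂ) ∈ _; rw [← hc2]
          exact Submodule.subset_span ⟨2, rfl⟩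
    rw [show N.col = Nᵀ from rfl, hspan, finrank_span_eq_card hli, Fintype.card_fin]
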